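/- For every integer p ≥ 3, the random K_p-free graph has no automatic presentation. More precisely, there do not exist a finite alphabet Σ, a regular language A ⊆ Σ*, and a symmetric irreflexive binary relation E on A whose convolution is a regular language, such that the graph (A,E) is K_p-free and satisfies: for every finite set Y ⊆ A of vertices and every subset K ⊆ Y whose induced subgraph is K_{p-1}-free, there exists a vertex x ∈ A adjacent to every vertex of K and to no vertex of Y ∖ K. -/

import Mathlib

/-- The convolution of an `n`-tuple of words. -/
def conv {α : Type*} {n : ℕ} (w : Fin n → List α) : List (Fin n → Option α) :=
  (List.range (Finset.univ.sup fun i => (w i).length)).map fun k i => (w i)[k]?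

namespace NoAuto

variable {α : Type*}

/-- iterated concatenation -/
def lpow (l : List α) : ℕ → List α
  | 0 => []
  | n+1 => l ++ lpow l n

@[simp] lemma lpow_zero (l : List α) : lpow l 0 = [] := rfl
@[simp] lemma lpow_succ (l : List α) (n : ℕ) : lpow l (n+1) = l ++ lpow l n := rfl

lemma lpow_add (l : List α) (m n : ℕ) : lpow l (m + n) = lpow l m ++ lpow l n := by
  induction m with
  | zero => simp
  | succ m ih =>
      have : l ++ lpow l (m + n) = l ++ (lpow l m ++ lpow l n) := by rw [ih]
      simpa [Nat.succ_add, List.append_assoc] using this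

@[simp] lemma length_lpow (l : List α) (n : ℕ) : (lpow l n).length = n * l.length := by
  induction n with
  | zero => simp
  | succ n ih => simp [ih, Nat.succ_mul, Nat.add_comm]

@[simp] lemma lpow_nil (n : ℕ) : lpow ([] : List α) n = [] := by
  induction n with
  | zero => rfl
  | succ n ih => simp [ih]

lemma map_lpow {β : Type*} (f : α → β) (l : List α) (n : ℕ) :
    (lpow l n).map f = lpow (l.map f) n := by
  induction n with
  | zero => rfl
  | succ n ih => simp [ih]

/-- a letter of a binary convolution -/
def pl (o1 o2 : Option α) : Fin 2 → Option α := ![o1, o2]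

@[simp] lemma pl_zero (o1 o2 : Option α) : pl o1 o2 0 = o1 := rfl
@[simp] lemma pl_one (o1 o2 : Option α) : pl o1 o2 1 = o2 := rfl

/-- recursive binary convolution -/
def cva : List α → List α → List (Fin 2 → Option α)
  | [], [] => []
  | [], b::y => pl none (some b) :: cva [] y
  | a::x, [] => pl (some a) none :: cva x []
  | a::x, b::y => pl (some a) (some b) :: cva x y

lemma sup_univ_fin2 (g : Fin 2 → ℕ) : (Finset.univ.sup g) = max (g 0) (g 1) := by
  have : (Finset.univ : Finset (Fin 2)) = {0, 1} := by decide
  rw [this, Finset.sup_insert, Finset.sup_singleton]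

lemma conv_two (x y : List α) :
    conv ![x, y] = (List.range (max x.length y.length)).map
      (fun k i => ((![x, y] : Fin 2 → List α) i)[k]?) := by
  unfold conv
  congr 1
  rw [sup_univ_fin2]
  simp [Matrix.cons_val_zero, Matrix.cons_val_one]

lemma conv_eq_cva (x y : List α) : conv ![x, y] = cva x y := by
  induction x generalizing y with
  | nil =>
      induction y with
      | nil => simp [conv_two, cva]
      | cons b y ihy =>
          rw [conv_two]
          show (List.range (max 0 (y.length + 1))).map _ = cva [] (b::y)
          rw [Nat.max_eq_right (Nat.zero_le _), List.range_succ_eq_map,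
            List.map_cons, List.map_map]
          rw [cva]
          congr 1
          · funext i; fin_cases i <;> simp [pl]
          · have h2 : ((fun k i => ((![([] : List α), b::y] : Fin 2 → List α) i)[k]?) ∘ Nat.succ)
                = fun k i => ((![([] : List α), y] : Fin 2 → List α) i)[k]? := by
              funext k i; fin_cases i <;> simp
            rw [h2]
            have := ihy
            rw [conv_two] at this
            simpa using this
  | cons a x ihx =>
      cases y with
      | nil =>
          rw [conv_two]
          show (List.range (max (x.length + 1) 0)).map _ = cva (a::x) []
          rw [Nat.max_eq_left (Nat.zero_le _), List.range_succ_eq_map,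
            List.map_cons, List.map_map]
          rw [cva]
          congr 1
          · funext i; fin_cases i <;> simp [pl]
          · have h2 : ((fun k i => ((![a::x, ([] : List α)] : Fin 2 → List α) i)[k]?) ∘ Nat.succ)
                = fun k i => ((![x, ([] : List α)] : Fin 2 → List α) i)[k]? := by
              funext k i; fin_cases i <;> simp
            rw [h2]
            have := ihx []
            rw [conv_two] at this
            simpa using this
      | cons b y =>
          rw [conv_two]
          show (List.range (max (x.length + 1) (y.length + 1))).map _ = cva (a::x) (b::y)
          rw [Nat.succ_max_succ, List.range_succ_eq_map, List.map_cons, List.map_map]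
          rw [cva]
          congr 1
          · funext i; fin_cases i <;> simp [pl]
          · have h2 : ((fun k i => ((![a::x, b::y] : Fin 2 → List α) i)[k]?) ∘ Nat.succ)
                = fun k i => ((![x, y] : Fin 2 → List α) i)[k]? := by
              funext k i; fin_cases i <;> simp
            rw [h2]
            have := ihx y
            rw [conv_two] at this
            exact this

def padL (x : List α) : List (Fin 2 → Option α) := x.map fun a => pl (some a) none
def padR (y : List α) : List (Fin 2 → Option α) := y.map fun b => pl none (some b)
def zip2 (x y : List α) : List (Fin 2 → Option α) :=
  List.zipWith (fun a b => pl (some a) (some b)) x y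

@[simp] lemma cva_nil_nil : cva ([] : List α) [] = [] := by simp [cva]

lemma cva_nil_right (x : List α) : cva x [] = padL x := by
  induction x with
  | nil => simp [padL]
  | cons a x ih => simp [cva, padL] at *; exact ih

lemma cva_nil_left (y : List α) : cva [] y = padR y := by
  induction y with
  | nil => simp [padR]
  | cons b y ih => simp [cva, padR] at *; exact ih

lemma cva_append (x1 x2 y1 y2 : List α) (h : x1.length = y1.length) :
    cva (x1 ++ x2) (y1 ++ y2) = zip2 x1 y1 ++ cva x2 y2 := by
  induction x1 generalizing y1 with
  | nil =>
      cases y1 with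
      | nil => simp [zip2]
      | cons b y1 => simp at h
  | cons a x1 ih =>
      cases y1 with
      | nil => simp at h
      | cons b y1 =>
          simp only [List.length_cons, Nat.succ.injEq] at h
          simp only [List.cons_append, cva, zip2, List.zipWith_cons_cons]
          rw [ih y1 (by simpa using h)]
          rfl

lemma cva_left_long (x1 x2 y : List α) (h : y.length ≤ x1.length) :
    cva (x1 ++ x2) y = cva x1 y ++ padL x2 := by
  induction x1 generalizing y with
  | nil =>
      have : y = [] := by
        cases y with
        | nil => rfl
        | cons b y => simp at h
      subst this
      simp [cva_nil_right, padL]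
  | cons a x1 ih =>
      cases y with
      | nil =>
          simp [cva_nil_right, padL]
      | cons b y =>
          simp only [List.cons_append, cva]
          rw [ih y (by simpa using h)]

lemma cva_fst (x y : List α) : (cva x y).filterMap (fun f => f 0) = x := by
  induction x generalizing y with
  | nil =>
      induction y with
      | nil => simp
      | cons b y ihy => simpa [cva, List.filterMap_cons] using ihy
  | cons a x ih =>
      cases y with
      | nil =>
          simp only [cva, List.filterMap_cons, pl_zero]
          exact congrArg (a :: ·) (ih [])
      | cons b y =>
          simp only [cva, List.filterMap_cons, pl_zero]
          exact congrArg (a :: ·) (ih y)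

lemma cva_snd (x y : List α) : (cva x y).filterMap (fun f => f 1) = y := by
  induction x generalizing y with
  | nil =>
      induction y with
      | nil => simp
      | cons b y ihy => simpa [cva, List.filterMap_cons] using ihy
  | cons a x ih =>
      cases y with
      | nil =>
          have := ih []
          simpa [cva, List.filterMap_cons] using this
      | cons b y =>
          simp only [cva, List.filterMap_cons, pl_one]
          exact congrArg (b :: ·) (ih y)

lemma conv_injective {x y x' y' : List α} (h : conv ![x, y] = conv ![x', y']) :
    x = x' ∧ y = y' := by
  rw [conv_eq_cva, conv_eq_cva] at h
  constructor
  · rw [← cva_fst x y, h, cva_fst]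
  · rw [← cva_snd x y, h, cva_snd]

lemma zip2_append (x1 x2 y1 y2 : List α) (h : x1.length = y1.length) :
    zip2 (x1 ++ x2) (y1 ++ y2) = zip2 x1 y1 ++ zip2 x2 y2 :=
  List.zipWith_append h

lemma zip2_lpow (b : List α) (n : ℕ) : zip2 (lpow b n) (lpow b n) = lpow (zip2 b b) n := by
  induction n with
  | zero => rfl
  | succ n ih => rw [lpow_succ, zip2_append b (lpow b n) b (lpow b n) rfl, ih]; rfl

lemma padL_append (x1 x2 : List α) : padL (x1 ++ x2) = padL x1 ++ padL x2 := by
  simp [padL]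
lemma padR_append (x1 x2 : List α) : padR (x1 ++ x2) = padR x1 ++ padR x2 := by
  simp [padR]
lemma padR_lpow (b : List α) (n : ℕ) : padR (lpow b n) = lpow (padR b) n := map_lpow _ _ _
@[simp] lemma length_zip2 (x y : List α) : (zip2 x y).length = min x.length y.length := by
  simp [zip2]
@[simp] lemma length_padL (x : List α) : (padL x).length = x.length := by simp [padL]

end NoAuto

namespace NoAuto

variable {α : Type*}

lemma evalFrom_lpow {σ : Type*} (M : DFA α σ) (V : List α) (s : σ) (i : ℕ) :
    M.evalFrom s (lpow V i) = (fun st => M.evalFrom st V)^[i] s := by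
  induction i generalizing s with
  | zero => rfl
  | succ i ih =>
      rw [lpow_succ, DFA.evalFrom_of_append, ih]
      exact (Function.iterate_succ_apply _ _ _).symm

lemma iterate_eventually_periodic {Q : Type*} [Fintype Q] (f : Q → Q) (s : Q) (e : ℕ)
    (he : Fintype.card Q ≤ e) :
    f^[e + (Fintype.card Q).factorial] s = f^[e] s := by
  classical
  set q := Fintype.card Q with hq
  obtain ⟨a, ha, b, hb, hab, heq⟩ :
      ∃ a ∈ Finset.range (q+1), ∃ b ∈ Finset.range (q+1), a ≠ b ∧ f^[a] s = f^[b] s := by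
    apply Finset.exists_ne_map_eq_of_card_lt_of_maps_to (t := (Finset.univ : Finset Q))
    · simp [hq]
    · intro a _; exact Finset.mem_univ _
  simp only [Finset.mem_range] at ha hb
  -- wlog a < b
  obtain ⟨a', b', ha'b', heq', hb'⟩ : ∃ a' b', a' < b' ∧ f^[a'] s = f^[b'] s ∧ b' ≤ q := by
    rcases Nat.lt_or_ge a b with h | h
    · exact ⟨a, b, h, heq, by omega⟩
    · exact ⟨b, a, by omega, heq.symm, by omega⟩
  set c := b' - a' with hc
  have hc1 : 1 ≤ c := by omega
  have key : ∀ d, f^[a' + d + c] s = f^[a' + d] s := by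
    intro d
    induction d with
    | zero =>
        simpa [Nat.add_zero, hc, Nat.add_sub_cancel' (le_of_lt ha'b')] using heq'.symm
    | succ d ihd =>
        have h1 : a' + (d+1) + c = (a' + d + c) + 1 := by omega
        have h2 : a' + (d+1) = (a' + d) + 1 := by omega
        rw [h1, h2, Function.iterate_succ_apply', Function.iterate_succ_apply', ihd]
  have key2 : ∀ j, a' ≤ j → f^[j + c] s = f^[j] s := by
    intro j hj
    have := key (j - a')
    rwa [Nat.add_sub_cancel' hj] at this
  have key3 : ∀ t j, a' ≤ j → f^[j + t * c] s = f^[j] s := by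
    intro t
    induction t with
    | zero => intro j _; simp
    | succ t iht =>
        intro j hj
        have h1 : j + (t+1) * c = (j + t * c) + c := by ring
        rw [h1, key2 _ (by omega), iht j hj]
  have hcd : c ∣ q.factorial := Nat.dvd_factorial hc1 (by omega)
  obtain ⟨k, hk⟩ := hcd
  rw [hk]
  have : e + c * k = e + k * c := by ring
  rw [this]
  exact key3 k e (by omega)

lemma poly_lt_two_pow (k : ℕ) : ∀ C : ℕ, ∃ N, ∀ n, N ≤ n → C * (n+1)^k < 2^n := by
  induction k with
  | zero =>
      intro C
      refine ⟨C+1, fun n hn => ?_⟩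
      have h2 : n < 2^n := Nat.lt_two_pow_self (n := n)
      have : C < n := by omega
      simpa using lt_trans this h2
  | succ k ih =>
      intro C
      obtain ⟨N0, h0⟩ := ih (C * 2^(k+2))
      refine ⟨2*N0 + 2*k + 10, fun n hn => ?_⟩
      set h := n / 2 with hh
      have hN0 : N0 ≤ h := by omega
      have hhn : n+1 ≤ 2*(h+1) := by omega
      have hkey : C * 2^(k+2) * (h+1)^k < 2^h := h0 h hN0
      have hb : C * (n+1)^(k+1) ≤ C * (2*(h+1))^(k+1) :=
        Nat.mul_le_mul_left _ (Nat.pow_le_pow_left hhn _)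
      have hexp : C * (2*(h+1))^(k+1) = (C * 2^(k+1) * (h+1)^k) * (h+1) := by
        rw [Nat.mul_pow]
        ring
      have hdbl : 2 * (C * 2^(k+1) * (h+1)^k) = C * 2^(k+2) * (h+1)^k := by ring
      have hlt : (C * 2^(k+1) * (h+1)^k) * (h+1) < 2^h * (h+1) := by
        apply Nat.mul_lt_mul_of_lt_of_le _ (le_refl (h+1)) (by omega)
        omega
      have hfin : 2^h * (h+1) ≤ 2^n := by
        have h1 : h + 1 ≤ 2^h := Nat.lt_two_pow_self (n := h)
        calc 2^h * (h+1) ≤ 2^h * 2^h := Nat.mul_le_mul_left _ h1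
          _ = 2^(h+h) := by rw [pow_add]
          _ ≤ 2^n := Nat.pow_le_pow_right (by norm_num) (by omega)
      omega

section Words

variable (Γ : Type*) [Fintype Γ] [DecidableEq Γ]

def wordsLen : ℕ → Finset (List Γ)
  | 0 => {[]}
  | k+1 => (Finset.univ ×ˢ wordsLen k).image fun p => p.1 :: p.2

lemma mem_wordsLen (k : ℕ) (w : List Γ) : w ∈ wordsLen Γ k ↔ w.length = k := by
  induction k generalizing w with
  | zero =>
      cases w <;> simp [wordsLen]
  | succ k ih =>
      cases w with
      | nil => simp [wordsLen]
      | cons a w =>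
          simp only [wordsLen, Finset.mem_image, Finset.mem_product, List.length_cons]
          constructor
          · rintro ⟨⟨b, u⟩, ⟨-, hu⟩, heq⟩
            simp only [List.cons.injEq] at heq
            obtain ⟨rfl, rfl⟩ := heq
            simp [(ih u).mp hu]
          · intro hl
            exact ⟨(a, w), ⟨Finset.mem_univ _, (ih w).mpr (by omega)⟩, rfl⟩

lemma card_wordsLen (k : ℕ) : (wordsLen Γ k).card ≤ (Fintype.card Γ)^k := by
  induction k with
  | zero => simp [wordsLen]
  | succ k ih =>
      calc (wordsLen Γ (k+1)).card ≤ ((Finset.univ : Finset Γ) ×ˢ wordsLen Γ k).card :=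
            Finset.card_image_le
        _ = Fintype.card Γ * (wordsLen Γ k).card := by
            rw [Finset.card_product]; rfl
        _ ≤ Fintype.card Γ * (Fintype.card Γ)^k := Nat.mul_le_mul_left _ ih
        _ = (Fintype.card Γ)^(k+1) := by ring

def wordsUpTo (n : ℕ) : Finset (List Γ) := (Finset.range (n+1)).biUnion (wordsLen Γ)

lemma mem_wordsUpTo (n : ℕ) (w : List Γ) : w ∈ wordsUpTo Γ n ↔ w.length ≤ n := by
  simp only [wordsUpTo, Finset.mem_biUnion, Finset.mem_range, mem_wordsLen]
  constructor
  · rintro ⟨k, hk, rfl⟩; omega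
  · intro h; exact ⟨w.length, by omega, rfl⟩

lemma geom_bound (c : ℕ) : ∀ n, (∑ k ∈ Finset.range n, c^k) ≤ (c+1)^n := by
  intro n
  rcases Nat.eq_zero_or_pos c with rfl | hc
  · cases n with
    | zero => simp
    | succ n =>
        rw [Finset.sum_range_succ']
        simp only [pow_zero]
        have : ∀ k ∈ Finset.range n, (0:ℕ)^(k+1) = 0 := by intro k _; simp
        rw [Finset.sum_congr rfl this]
        simp
  · induction n with
    | zero => simp
    | succ n ih =>
        rw [Finset.sum_range_succ]
        have h1 : c^n ≤ (c+1)^n := Nat.pow_le_pow_left (by omega) _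
        have h2 : (c+1)^(n+1) = (c+1)^n * c + (c+1)^n := by ring
        have h3 : (c+1)^n ≤ (c+1)^n * c := Nat.le_mul_of_pos_right _ hc
        omega

lemma card_wordsUpTo (n : ℕ) :
    (wordsUpTo Γ n).card ≤ (Fintype.card Γ + 1)^(n+1) := by
  calc (wordsUpTo Γ n).card ≤ ∑ k ∈ Finset.range (n+1), (wordsLen Γ k).card :=
        Finset.card_biUnion_le
    _ ≤ ∑ k ∈ Finset.range (n+1), (Fintype.card Γ)^k :=
        Finset.sum_le_sum fun k _ => card_wordsLen Γ k
    _ ≤ (Fintype.card Γ + 1)^(n+1) := geom_bound _ _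

end Words

lemma comm_root_aux (n : ℕ) : ∀ x y : List α, x.length + y.length ≤ n → x ++ y = y ++ x →
    ∃ z i j, x = lpow z i ∧ y = lpow z j := by
  induction n with
  | zero =>
      intro x y hlen _
      have hx : x = [] := List.length_eq_zero_iff.mp (by omega)
      have hy : y = [] := List.length_eq_zero_iff.mp (by omega)
      exact ⟨[], 0, 0, by simp [hx], by simp [hy]⟩
  | succ n ih =>
      intro x y hlen hcomm
      rcases le_or_gt x.length y.length with hxy | hxy
      · rcases List.eq_nil_or_concat x with rfl | _
        · exact ⟨y, 0, 1, by simp, by simp⟩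
        · have hxne : x ≠ [] := by rename_i h; rcases h with ⟨_, _, rfl⟩; simp
          have hxpos : 0 < x.length := List.length_pos_iff.mpr hxne
          have htake : y.take x.length = x := by
            have h1 : (x ++ y).take x.length = x := List.take_left (l₁ := x) (l₂ := y)
            have h2 : (y ++ x).take x.length = y.take x.length :=
              List.take_append_of_le_length hxy
            rw [← h2, ← hcomm, h1]
          set y' := y.drop x.length with hy'
          have hy : y = x ++ y' := by
            conv_lhs => rw [← List.take_append_drop x.length y]
            rw [htake]
          have hcomm' : x ++ y' = y' ++ x := by
            have h1 : x ++ (x ++ y') = (x ++ y') ++ x := by rw [← hy]; exact hcomm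
            rw [List.append_assoc] at h1
            exact (List.append_cancel_left h1 : x ++ y' = y' ++ x)
          have hlen' : x.length + y'.length ≤ n := by
            have : y'.length = y.length - x.length := by simp [hy']
            omega
          obtain ⟨z, i, j, hx, hy'eq⟩ := ih x y' hlen' hcomm'
          exact ⟨z, i, i + j, hx, by rw [hy, hx, hy'eq, ← lpow_add]⟩
      · rcases List.eq_nil_or_concat y with rfl | _
        · exact ⟨x, 1, 0, by simp, by simp⟩
        · have hyne : y ≠ [] := by rename_i h; rcases h with ⟨_, _, rfl⟩; simp
          have hypos : 0 < y.length := List.length_pos_iff.mpr hyne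
          have htake : x.take y.length = y := by
            have h1 : (y ++ x).take y.length = y := List.take_left (l₁ := y) (l₂ := x)
            have h2 : (x ++ y).take y.length = x.take y.length :=
              List.take_append_of_le_length (le_of_lt hxy)
            rw [← h2, hcomm, h1]
          set x' := x.drop y.length with hx'
          have hx : x = y ++ x' := by
            conv_lhs => rw [← List.take_append_drop y.length x]
            rw [htake]
          have hcomm' : y ++ x' = x' ++ y := by
            have h1 : y ++ (y ++ x') = (y ++ x') ++ y := by rw [← hx]; exact hcomm.symm
            rw [List.append_assoc] at h1
            exact (List.append_cancel_left h1 : y ++ x' = x' ++ y)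
          have hlen' : y.length + x'.length ≤ n := by
            have : x'.length = x.length - y.length := by simp [hx']
            omega
          obtain ⟨z, i, j, hyeq, hx'eq⟩ := ih y x' hlen' hcomm'
          exact ⟨z, i + j, i, by rw [hx, hyeq, hx'eq, ← lpow_add], hyeq⟩

lemma loop_root {x y : List α} (h : x ++ y = y ++ x) (hx : x ≠ []) :
    ∃ z t, y = lpow z t ∧ z ≠ [] ∧ z.length ≤ x.length := by
  obtain ⟨z, i, j, hxz, hyz⟩ := comm_root_aux (x.length + y.length) x y le_rfl h
  have hi : i ≠ 0 := by
    rintro rfl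
    exact hx (by simpa using hxz)
  have hz : z ≠ [] := by
    rintro rfl
    exact hx (by simpa using hxz)
  refine ⟨z, j, hyz, hz, ?_⟩
  have : x.length = i * z.length := by rw [hxz]; simp
  have hz1 : 1 ≤ z.length := List.length_pos_iff.mpr hz
  have hi1 : 1 ≤ i := Nat.one_le_iff_ne_zero.mpr hi
  nlinarith

lemma ramsey_aux {β : Type*} [DecidableEq β] (R : β → β → Prop)
    (hsym : ∀ x y, R x y → R y x) :
    ∀ (n a b : ℕ) (V : Finset β), a + b ≤ n → Nat.choose (a + b) a ≤ V.card →
    (∃ C, C ⊆ V ∧ C.card = a + 1 ∧ ∀ x ∈ C, ∀ y ∈ C, x ≠ y → R x y) ∨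
    (∃ I, I ⊆ V ∧ I.card = b + 1 ∧ ∀ x ∈ I, ∀ y ∈ I, x ≠ y → ¬ R x y) := by
  classical
  intro n
  induction n with
  | zero =>
      intro a b V hab hV
      have ha : a = 0 := by omega
      have hb : b = 0 := by omega
      subst ha; subst hb
      simp only [Nat.choose_self] at hV
      obtain ⟨v, hv⟩ := Finset.card_pos.mp (show 0 < V.card by omega)
      refine Or.inl ⟨{v}, by simpa using hv, by simp, ?_⟩
      intro x hx y hy hxy
      simp only [Finset.mem_singleton] at hx hy
      exact absurd (hx.trans hy.symm) hxy
  | succ n ihn =>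
      intro a b V hab hV
      rcases Nat.eq_zero_or_pos a with rfl | hapos
      · have h1 : 1 ≤ V.card := le_trans (by simp) hV
        obtain ⟨v, hv⟩ := Finset.card_pos.mp (show 0 < V.card by omega)
        refine Or.inl ⟨{v}, by simpa using hv, by simp, ?_⟩
        intro x hx y hy hxy
        simp only [Finset.mem_singleton] at hx hy
        exact absurd (hx.trans hy.symm) hxy
      rcases Nat.eq_zero_or_pos b with rfl | hbpos
      · have h1 : 1 ≤ V.card := le_trans (by simp) hV
        obtain ⟨v, hv⟩ := Finset.card_pos.mp (show 0 < V.card by omega)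
        refine Or.inr ⟨{v}, by simpa using hv, by simp, ?_⟩
        intro x hx y hy hxy
        simp only [Finset.mem_singleton] at hx hy
        exact absurd (hx.trans hy.symm) hxy
      have hVpos : 0 < V.card :=
        lt_of_lt_of_le (Nat.choose_pos (by omega)) hV
      obtain ⟨v, hv⟩ := Finset.card_pos.mp hVpos
      set W := V.erase v with hW
      set Nv := W.filter (fun u => R v u) with hNv
      set Mv := W.filter (fun u => ¬ R v u) with hMv
      have hcard : Nv.card + Mv.card = V.card - 1 := by
        rw [hNv, hMv, Finset.card_filter_add_card_filter_not]
        rw [hW, Finset.card_erase_of_mem hv]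
      have hchoose : Nat.choose (a+b) a
          = Nat.choose (a-1+b) (a-1) + Nat.choose (a+(b-1)) a := by
        obtain ⟨a', rfl⟩ : ∃ a', a = a'+1 := ⟨a-1, by omega⟩
        obtain ⟨b', rfl⟩ : ∃ b', b = b'+1 := ⟨b-1, by omega⟩
        have h1 : a'+1+(b'+1) = (a'+1+b')+1 := by ring
        have h2 : a'+1-1 = a' := by omega
        have h3 : (b'+1)-1 = b' := by omega
        have h4 : a'+(b'+1) = a'+1+b' := by omega
        rw [h1, Nat.choose_succ_succ, h2, h3, h4]
      rcases le_or_gt (Nat.choose (a-1+b) (a-1)) Nv.card with hN | hN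
      · rcases ihn (a-1) b Nv (by omega) hN with ⟨C, hCsub, hCcard, hCcl⟩ | ⟨I, hIsub, hIcard, hIind⟩
        · have hvC : v ∉ C := by
            intro hvC
            have := hCsub hvC
            rw [hNv] at this
            exact Finset.notMem_erase v V (Finset.mem_of_mem_filter _ this)
          refine Or.inl ⟨insert v C, ?_, ?_, ?_⟩
          · intro x hx
            rcases Finset.mem_insert.mp hx with rfl | hx
            · exact hv
            · exact Finset.erase_subset v V (Finset.mem_of_mem_filter _ (hCsub hx))
          · rw [Finset.card_insert_of_notMem hvC, hCcard]; omega
          · intro x hx y hy hxy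
            rcases Finset.mem_insert.mp hx with rfl | hxC
            · rcases Finset.mem_insert.mp hy with rfl | hyC
              · exact absurd rfl hxy
              · exact (Finset.mem_filter.mp (hCsub hyC)).2
            · rcases Finset.mem_insert.mp hy with rfl | hyC
              · exact hsym _ _ ((Finset.mem_filter.mp (hCsub hxC)).2)
              · exact hCcl x hxC y hyC hxy
        · refine Or.inr ⟨I, ?_, hIcard, hIind⟩
          intro x hx
          exact Finset.erase_subset v V (Finset.mem_of_mem_filter _ (hIsub hx))
      · have hM : Nat.choose (a+(b-1)) a ≤ Mv.card := by omega
        rcases ihn a (b-1) Mv (by omega) hM with ⟨C, hCsub, hCcard, hCcl⟩ | ⟨I, hIsub, hIcard, hIind⟩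
        · refine Or.inl ⟨C, ?_, hCcard, hCcl⟩
          intro x hx
          exact Finset.erase_subset v V (Finset.mem_of_mem_filter _ (hCsub hx))
        · have hvI : v ∉ I := by
            intro hvI
            have := hIsub hvI
            rw [hMv] at this
            exact Finset.notMem_erase v V (Finset.mem_of_mem_filter _ this)
          refine Or.inr ⟨insert v I, ?_, ?_, ?_⟩
          · intro x hx
            rcases Finset.mem_insert.mp hx with rfl | hx
            · exact hv
            · exact Finset.erase_subset v V (Finset.mem_of_mem_filter _ (hIsub hx))
          · rw [Finset.card_insert_of_notMem hvI, hIcard]; omega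
          · intro x hx y hy hxy
            rcases Finset.mem_insert.mp hx with rfl | hxI
            · rcases Finset.mem_insert.mp hy with rfl | hyI
              · exact absurd rfl hxy
              · exact (Finset.mem_filter.mp (hIsub hyI)).2
            · rcases Finset.mem_insert.mp hy with rfl | hyI
              · intro hr
                exact (Finset.mem_filter.mp (hIsub hxI)).2 (hsym _ _ hr)
              · exact hIind x hxI y hyI hxy

lemma choose_le_pow (n : ℕ) : ∀ k, Nat.choose n k ≤ n ^ k := by
  induction n with
  | zero =>
      intro k
      cases k with
      | zero => simp
      | succ k => simp [Nat.choose]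
  | succ n ih =>
      intro k
      cases k with
      | zero => simp
      | succ k =>
          rw [Nat.choose_succ_succ]
          show Nat.choose n k + Nat.choose n (k+1) ≤ (n+1)^(k+1)
          have h1 := ih k
          have h2 := ih (k+1)
          have h3 : (n+1)^(k+1) = (n+1) * (n+1)^k := by ring
          have h4 : n^(k+1) = n * n^k := by ring
          have h5 : n^k ≤ (n+1)^k := Nat.pow_le_pow_left (by omega) _
          have h6 : n * n^k ≤ n * (n+1)^k := Nat.mul_le_mul_left _ h5
          have h7 : (n+1) * (n+1)^k = n * (n+1)^k + (n+1)^k := by ring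
          omega

end NoAuto

namespace NoAuto

variable {α : Type*}

/-- words decomposable into at most `k` pumped blocks with pieces of length `≤ q` -/
inductive Shaped (q : ℕ) : ℕ → List α → Prop
  | base (w : List α) : w.length ≤ q → Shaped q 0 w
  | step (u z w' : List α) (t k : ℕ) : u.length ≤ q → z.length ≤ q → (z ≠ [] ∨ t = 0) →
      Shaped q k w' → Shaped q (k+1) (u ++ lpow z t ++ w')

lemma Shaped.mono {q k : ℕ} {w : List α} (h : Shaped q k w) : Shaped q (k+1) w := by
  have := Shaped.step [] [] w 0 k (by simp) (by simp) (Or.inr rfl) h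
  simpa using this

lemma Shaped.ofBase {q : ℕ} {w : List α} (h : w.length ≤ q) (k : ℕ) : Shaped q k w := by
  induction k with
  | zero => exact Shaped.base w h
  | succ k ih => exact ih.mono

lemma shaped_finset (Γ : Type*) [Fintype Γ] [DecidableEq Γ] (q : ℕ) (k n : ℕ) :
    ∃ F : Finset (List Γ),
      (∀ w : List Γ, Shaped q k w → w.length ≤ n → w ∈ F) ∧
      F.card ≤ (Fintype.card Γ + 1)^(q+1) *
        (((Fintype.card Γ + 1)^(q+1))^2 * (n+1))^k := by
  set B := (Fintype.card Γ + 1)^(q+1) with hB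
  induction k with
  | zero =>
      refine ⟨wordsUpTo Γ q, ?_, ?_⟩
      · intro w hw _
        cases hw with
        | base _ h => exact (mem_wordsUpTo Γ q w).mpr h
      · simpa using card_wordsUpTo Γ q
  | succ k ih =>
      obtain ⟨F, hF, hFcard⟩ := ih
      refine ⟨((wordsUpTo Γ q ×ˢ wordsUpTo Γ q) ×ˢ (Finset.range (n+1) ×ˢ F)).image
        (fun x => x.1.1 ++ lpow x.1.2 x.2.1 ++ x.2.2), ?_, ?_⟩
      · intro w hw hlen
        cases hw with
        | step u z w' t k hu hz hzt hw' =>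
            apply Finset.mem_image.mpr
            refine ⟨((u, z), (t, w')), ?_, rfl⟩
            have hlen' : u.length + (t * z.length + w'.length) ≤ n := by
              simpa using hlen
            have ht : t ≤ n := by
              rcases hzt with hz0 | rfl
              · have h1 : 1 ≤ z.length := List.length_pos_iff.mpr hz0
                nlinarith
              · omega
            simp only [Finset.mem_product, Finset.mem_range]
            exact ⟨⟨(mem_wordsUpTo Γ q u).mpr hu, (mem_wordsUpTo Γ q z).mpr hz⟩,
              ⟨by omega, hF w' hw' (by omega)⟩⟩
      · calc _ ≤ ((wordsUpTo Γ q ×ˢ wordsUpTo Γ q) ×ˢ (Finset.range (n+1) ×ˢ F)).card :=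
              Finset.card_image_le
          _ = ((wordsUpTo Γ q).card * (wordsUpTo Γ q).card) * ((n+1) * F.card) := by
              simp [Finset.card_product]
          _ ≤ (B * B) * ((n+1) * (B * (B^2 * (n+1))^k)) := by
              have h1 := card_wordsUpTo Γ q
              apply Nat.mul_le_mul
              · exact Nat.mul_le_mul h1 h1
              · exact Nat.mul_le_mul_left _ hFcard
          _ = B * (B^2 * (n+1))^(k+1) := by ring
  
lemma decompose {σA : Type*} [Fintype σA] [DecidableEq σA] (MA : DFA α σA)
    (hcomm : ∀ s : σA, (∃ w0, MA.evalFrom MA.start w0 = s) →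
      (∃ w1, MA.evalFrom s w1 ∈ MA.accept) →
      ∀ g l : List α, MA.evalFrom s g = s → MA.evalFrom s l = s → g ++ l = l ++ g) :
    ∀ (N : ℕ) (S : Finset σA) (s0 : σA) (w : List α), S.card ≤ N →
      (∀ j, 1 ≤ j → j ≤ w.length → MA.evalFrom s0 (w.take j) ∈ S) →
      (∀ j, 1 ≤ j → j ≤ w.length →
        (∃ w0, MA.evalFrom MA.start w0 = MA.evalFrom s0 (w.take j)) ∧
        (∃ w1, MA.evalFrom (MA.evalFrom s0 (w.take j)) w1 ∈ MA.accept)) →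
      Shaped (Fintype.card σA) S.card w := by
  intro N
  induction N with
  | zero =>
      intro S s0 w hS hin _
      have hw : w.length = 0 := by
        by_contra h
        have h1 : MA.evalFrom s0 (w.take 1) ∈ S := hin 1 le_rfl (by omega)
        have : 0 < S.card := Finset.card_pos.mpr ⟨_, h1⟩
        omega
      have h0 : S.card = 0 := by omega
      rw [h0]
      exact Shaped.base w (by omega)
  | succ N ihN =>
      intro S s0 w hS hin htrim
      rcases le_or_gt w.length S.card with hshort | hlong
      · exact Shaped.ofBase (le_trans hshort (Finset.card_le_univ S)) _
      set st : ℕ → σA := fun j => MA.evalFrom s0 (w.take j) with hst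
      have hmap : ∀ j ∈ Finset.Icc 1 (S.card+1), st j ∈ S := fun j hj => by
        have h1 := (Finset.mem_Icc.mp hj).1
        have h2 := (Finset.mem_Icc.mp hj).2
        exact hin j h1 (by omega)
      obtain ⟨a, ha, b, hb, hab, heq⟩ :=
        Finset.exists_ne_map_eq_of_card_lt_of_maps_to
          (s := Finset.Icc 1 (S.card+1)) (t := S) (by simp [Nat.card_Icc]) hmap
      simp only [Finset.mem_Icc] at ha hb
      obtain ⟨a', b', ha'1, ha'b', hb'S, heq'⟩ :
          ∃ a' b', 1 ≤ a' ∧ a' < b' ∧ b' ≤ S.card+1 ∧ st a' = st b' := by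
        rcases lt_or_gt_of_ne hab with h | h
        · exact ⟨a, b, by omega, h, by omega, heq⟩
        · exact ⟨b, a, by omega, h, by omega, heq.symm⟩
      set sstar := st a' with hsstar
      set E := (Finset.Icc 1 w.length).filter (fun j => st j = sstar) with hE
      have hbE : b' ∈ E := by
        rw [hE, Finset.mem_filter, Finset.mem_Icc]
        exact ⟨⟨by omega, by omega⟩, heq'.symm⟩
      set e := E.max' ⟨b', hbE⟩ with he
      have heE : e ∈ E := Finset.max'_mem _ _
      have he1 : 1 ≤ e := by
        have := (Finset.mem_Icc.mp (Finset.mem_filter.mp heE).1).1; omega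
      have helen : e ≤ w.length := (Finset.mem_Icc.mp (Finset.mem_filter.mp heE).1).2
      have hste : st e = sstar := (Finset.mem_filter.mp heE).2
      have heb : b' ≤ e := Finset.le_max' _ _ hbE
      have hemax : ∀ j, 1 ≤ j → j ≤ w.length → st j = sstar → j ≤ e := by
        intro j h1 h2 h3
        apply Finset.le_max'
        rw [hE, Finset.mem_filter, Finset.mem_Icc]
        exact ⟨⟨h1, h2⟩, h3⟩
      set u := w.take a' with hu
      set gam := (w.drop a').take (b' - a') with hgam
      set lam := (w.drop a').take (e - a') with hlam
      set tail := w.drop e with htail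
      have htakeb : w.take b' = u ++ gam := by
        rw [hu, hgam, ← List.take_add]
        congr 1
        omega
      have htakee : w.take e = u ++ lam := by
        rw [hu, hlam, ← List.take_add]
        congr 1
        omega
      have ha'len : a' ≤ w.length := by omega
      have hb'len : b' ≤ w.length := by omega
      have hstu : MA.evalFrom s0 u = sstar := by rw [hsstar, hst, hu]
      have hgamloop : MA.evalFrom sstar gam = sstar := by
        have h1 : st b' = MA.evalFrom (MA.evalFrom s0 u) gam := by
          rw [hst]
          show MA.evalFrom s0 (w.take b') = _
          rw [htakeb, DFA.evalFrom_of_append]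
        rw [hstu] at h1
        rw [← h1, ← heq']
      have hlamloop : MA.evalFrom sstar lam = sstar := by
        have h1 : st e = MA.evalFrom (MA.evalFrom s0 u) lam := by
          rw [hst]
          show MA.evalFrom s0 (w.take e) = _
          rw [htakee, DFA.evalFrom_of_append]
        rw [hstu] at h1
        rw [← h1, hste]
      have hgamne : gam ≠ [] := by
        rw [hgam]
        intro h
        have := congrArg List.length h
        simp only [List.length_take, List.length_drop, List.length_nil] at this
        omega
      have htrim1 := htrim a' ha'1 ha'len
      have hcm := hcomm sstar htrim1.1 htrim1.2 gam lam hgamloop hlamloop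
      obtain ⟨z, t, hlamz, hzne, hzlen⟩ := loop_root hcm hgamne
      have hsS : sstar ∈ S := hmap a' (Finset.mem_Icc.mpr ⟨by omega, by omega⟩)
      have hScard : 1 ≤ S.card := Finset.card_pos.mpr ⟨sstar, hsS⟩
      -- tail run
      have htailst : ∀ j, MA.evalFrom sstar (tail.take j) = st (e + j) := by
        intro j
        rw [htail, hst]
        show _ = MA.evalFrom s0 (w.take (e + j))
        rw [List.take_add, DFA.evalFrom_of_append]
        congr 1
        rw [← hste, hst]
      have htail_in : ∀ j, 1 ≤ j → j ≤ tail.length →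
          MA.evalFrom sstar (tail.take j) ∈ S.erase sstar := by
        intro j h1 h2
        rw [htailst j]
        have hlen : e + j ≤ w.length := by
          rw [htail] at h2
          simp only [List.length_drop] at h2
          omega
        apply Finset.mem_erase.mpr
        constructor
        · intro hbad
          have := hemax (e+j) (by omega) hlen hbad
          omega
        · exact hin (e+j) (by omega) hlen
      have htail_trim : ∀ j, 1 ≤ j → j ≤ tail.length →
          (∃ w0, MA.evalFrom MA.start w0 = MA.evalFrom sstar (tail.take j)) ∧
          (∃ w1, MA.evalFrom (MA.evalFrom sstar (tail.take j)) w1 ∈ MA.accept) := by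
        intro j h1 h2
        rw [htailst j]
        have hlen : e + j ≤ w.length := by
          rw [htail] at h2
          simp only [List.length_drop] at h2
          omega
        exact htrim (e+j) (by omega) hlen
      have hcard' : (S.erase sstar).card ≤ N := by
        rw [Finset.card_erase_of_mem hsS]
        omega
      have htailShaped := ihN (S.erase sstar) sstar tail hcard' htail_in htail_trim
      have hw : w = u ++ lpow z t ++ tail := by
        rw [← hlamz, htail]
        conv_lhs => rw [← List.take_append_drop e w]
        rw [htakee, List.append_assoc]
      have hulen : u.length ≤ Fintype.card σA := by
        rw [hu]
        simp only [List.length_take]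
        have : S.card ≤ Fintype.card σA := Finset.card_le_univ S
        omega
      have hzlen' : z.length ≤ Fintype.card σA := by
        have hgl : gam.length ≤ S.card := by
          rw [hgam]
          simp only [List.length_take, List.length_drop]
          omega
        have : S.card ≤ Fintype.card σA := Finset.card_le_univ S
        omega
      have hstep := Shaped.step u z tail t (S.erase sstar).card hulen hzlen'
        (Or.inl hzne) htailShaped
      rw [Finset.card_erase_of_mem hsS] at hstep
      have hfix : S.card - 1 + 1 = S.card := by omega
      rw [hfix] at hstep
      rw [hw]
      exact hstep

end NoAuto

namespace NoAuto

lemma card_wordsLen_eq (Γ : Type*) [Fintype Γ] [DecidableEq Γ] (k : ℕ) :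
    (wordsLen Γ k).card = (Fintype.card Γ)^k := by
  induction k with
  | zero => simp [wordsLen]
  | succ k ih =>
      have hinj : Function.Injective (fun p : Γ × List Γ => p.1 :: p.2) := by
        rintro ⟨a, u⟩ ⟨b, v⟩ h
        simp only [List.cons.injEq] at h
        simp [h.1, h.2]
      rw [wordsLen, Finset.card_image_of_injective _ hinj, Finset.card_product, ih,
        Finset.card_univ]
      ring

/-- key counting lemma : distinct neighbourhoods on a short independent set force
many "types" (prefix of length `n` together with suffix behaviour). -/
lemma witness_count
    {Γ : Type} [Fintype Γ] (A : Set (List Γ)) (E : List Γ → List Γ → Prop)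
    {σE : Type} [Fintype σE] (ME : DFA (Fin 2 → Option Γ) σE)
    (hacc : ∀ x ∈ A, ∀ y ∈ A, (E x y ↔ cva x y ∈ ME.accepts))
    (p : ℕ) (hp : 3 ≤ p)
    (hext : ∀ Y : Finset (List Γ), ↑Y ⊆ A →
          ∀ K : Finset (List Γ), K ⊆ Y →
            (¬ ∃ s : Finset (List Γ), s ⊆ K ∧ s.card = p - 1 ∧
                ∀ x ∈ s, ∀ y ∈ s, x ≠ y → E x y) →
            ∃ x ∈ A, (∀ v ∈ K, E x v) ∧ (∀ v ∈ Y, v ∉ K → ¬ E x v))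
    (I : Finset (List Γ)) (hIA : ↑I ⊆ A)
    (hind : ∀ x ∈ I, ∀ y ∈ I, x ≠ y → ¬ E x y)
    (n : ℕ) (hn : ∀ v ∈ I, v.length ≤ n)
    (PF : Finset (List Γ))
    (hPF : ∀ u ∈ A, (u.length < n → u ∈ PF) ∧ (n ≤ u.length → u.take n ∈ PF)) :
    2 ^ I.card ≤ PF.card * (1 + 2 ^ Fintype.card σE) := by
  classical
  have hfree : ∀ S, S ∈ I.powerset →
      ¬ ∃ s : Finset (List Γ), s ⊆ S ∧ s.card = p - 1 ∧
        ∀ x ∈ s, ∀ y ∈ s, x ≠ y → E x y := by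
    rintro S hS ⟨s, hsS, hscard, hscl⟩
    have hSI : S ⊆ I := Finset.mem_powerset.mp hS
    have h2 : 1 < s.card := by omega
    obtain ⟨x, hx, y, hy, hxy⟩ := Finset.one_lt_card.mp h2
    exact hind x (hSI (hsS hx)) y (hSI (hsS hy)) hxy (hscl x hx y hy hxy)
  have hw : ∀ S, S ∈ I.powerset →
      ∃ x, x ∈ A ∧ (∀ v ∈ S, E x v) ∧ (∀ v ∈ I, v ∉ S → ¬ E x v) := by
    intro S hS
    obtain ⟨x, hxA, h1, h2⟩ := hext I hIA S (Finset.mem_powerset.mp hS) (hfree S hS)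
    exact ⟨x, hxA, h1, h2⟩
  choose! xw hxwA hxw1 hxw2 using hw
  set hfun : List Γ → (σE → Bool) :=
    fun x st => decide (ME.evalFrom st (padR []) = ME.evalFrom st (padR []))  with hjunk
  clear hjunk
  -- the actual type map
  set pad : List Γ → List (Fin 2 → Option Γ) := fun x => padL x with hpad
  set τ : Finset (List Γ) → (List Γ ⊕ (List Γ × (σE → Bool))) := fun S =>
    if (xw S).length < n then Sum.inl (xw S)
    else Sum.inr ((xw S).take n,
      fun st => decide (ME.evalFrom st (padL ((xw S).drop n)) ∈ ME.accept)) with hτ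
  have hEiff : ∀ x, x ∈ A → n ≤ x.length → ∀ v ∈ A, v.length ≤ n →
      (E x v ↔ (ME.evalFrom (ME.evalFrom ME.start (cva (x.take n) v))
        (padL (x.drop n)) ∈ ME.accept)) := by
    intro x hxA hxn v hvA hvn
    rw [hacc x hxA v hvA, DFA.mem_accepts]
    have hsplit : cva x v = cva (x.take n) v ++ padL (x.drop n) := by
      conv_lhs => rw [← List.take_append_drop n x]
      apply cva_left_long
      rw [List.length_take]
      omega
    rw [hsplit]
    show ME.evalFrom ME.start _ ∈ ME.accept ↔ _
    rw [DFA.evalFrom_of_append]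
  have hinj : Set.InjOn τ ↑I.powerset := by
    intro S hS S' hS' hfeq
    simp only [Finset.mem_coe] at hS hS'
    have htr : ∀ v ∈ I, (E (xw S) v ↔ E (xw S') v) := by
      intro v hv
      have hvA : v ∈ A := hIA hv
      by_cases h1 : (xw S).length < n <;> by_cases h2 : (xw S').length < n
      · simp only [hτ, h1, h2, if_pos] at hfeq
        rw [Sum.inl.injEq] at hfeq
        rw [hfeq]
      · simp only [hτ, h1, h2, if_pos, if_neg, not_false_iff] at hfeq
        exact absurd hfeq (by simp)
      · simp only [hτ, h1, h2, if_pos, if_neg, not_false_iff] at hfeq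
        exact absurd hfeq (by simp)
      · simp only [hτ, h1, h2, if_neg, not_false_iff] at hfeq
        rw [Sum.inr.injEq, Prod.mk.injEq] at hfeq
        obtain ⟨hpre, hbeh⟩ := hfeq
        rw [hEiff (xw S) (hxwA S hS) (by omega) v hvA (hn v hv),
          hEiff (xw S') (hxwA S' hS') (by omega) v hvA (hn v hv)]
        have hstate : ME.evalFrom ME.start (cva ((xw S).take n) v)
            = ME.evalFrom ME.start (cva ((xw S').take n) v) := by rw [hpre]
        rw [hstate]
        have := congrFun hbeh (ME.evalFrom ME.start (cva ((xw S').take n) v))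
        simpa [decide_eq_decide] using this
    apply Finset.ext
    intro v
    by_cases hvI : v ∈ I
    · constructor
      · intro hvS
        by_contra hvS'
        exact hxw2 S' hS' v hvI hvS' ((htr v hvI).mp (hxw1 S hS v hvS))
      · intro hvS'
        by_contra hvS
        exact hxw2 S hS v hvI hvS ((htr v hvI).mpr (hxw1 S' hS' v hvS'))
    · constructor
      · intro hvS; exact absurd (Finset.mem_powerset.mp hS hvS) hvI
      · intro hvS'; exact absurd (Finset.mem_powerset.mp hS' hvS') hvI
  have hmaps : ∀ S ∈ I.powerset, τ S ∈ PF.disjSum (PF ×ˢ (Finset.univ : Finset (σE → Bool))) := by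
    intro S hS
    by_cases h1 : (xw S).length < n
    · simp only [hτ, h1, if_pos]
      rw [Finset.inl_mem_disjSum]
      exact (hPF (xw S) (hxwA S hS)).1 h1
    · simp only [hτ, h1, if_neg, not_false_iff]
      rw [Finset.inr_mem_disjSum, Finset.mem_product]
      exact ⟨(hPF (xw S) (hxwA S hS)).2 (by omega), Finset.mem_univ _⟩
  calc 2 ^ I.card = I.powerset.card := (Finset.card_powerset I).symm
    _ ≤ (PF.disjSum (PF ×ˢ (Finset.univ : Finset (σE → Bool)))).card :=
        Finset.card_le_card_of_injOn τ hmaps hinj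
    _ = PF.card + PF.card * 2 ^ Fintype.card σE := by
        rw [Finset.card_disjSum, Finset.card_product]
        congr 2
        rw [Finset.card_univ, Fintype.card_fun, Fintype.card_bool]
    _ = PF.card * (1 + 2 ^ Fintype.card σE) := by ring

end NoAuto

namespace NoAuto

lemma A_infinite {Γ : Type} (A : Set (List Γ)) (E : List Γ → List Γ → Prop)
    (p : ℕ) (hp : 3 ≤ p)
    (hext : ∀ Y : Finset (List Γ), ↑Y ⊆ A →
          ∀ K : Finset (List Γ), K ⊆ Y →
            (¬ ∃ s : Finset (List Γ), s ⊆ K ∧ s.card = p - 1 ∧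
                ∀ x ∈ s, ∀ y ∈ s, x ≠ y → E x y) →
            ∃ x ∈ A, (∀ v ∈ K, E x v) ∧ (∀ v ∈ Y, v ∉ K → ¬ E x v)) :
    A.Infinite := by
  classical
  by_contra hfin
  rw [Set.not_infinite] at hfin
  set Y := hfin.toFinset with hY
  have hYA : ↑Y ⊆ A := by
    intro v hv
    rwa [hY, Set.Finite.coe_toFinset] at hv
  set F : Finset (Finset (List Γ)) := insert ∅ (Y.image fun v => ({v} : Finset (List Γ)))
    with hF
  have hFprop : ∀ K ∈ F, K ⊆ Y ∧ K.card ≤ 1 := by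
    intro K hK
    rw [hF, Finset.mem_insert] at hK
    rcases hK with rfl | hK
    · exact ⟨Finset.empty_subset Y, by simp⟩
    · obtain ⟨v, hv, rfl⟩ := Finset.mem_image.mp hK
      exact ⟨Finset.singleton_subset_iff.mpr hv, by simp⟩
  have hwit : ∀ K, K ∈ F → ∃ x, x ∈ A ∧ (∀ v ∈ K, E x v) ∧ (∀ v ∈ Y, v ∉ K → ¬ E x v) := by
    intro K hK
    obtain ⟨x, h⟩ := hext Y hYA K (hFprop K hK).1 (by
      rintro ⟨s, hsK, hscard, -⟩
      have h1 := Finset.card_le_card hsK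
      have h2 := (hFprop K hK).2
      omega)
    exact ⟨x, h⟩
  choose! xw hxwA hxw1 hxw2 using hwit
  have hinj : Set.InjOn xw ↑F := by
    intro K hK K' hK' heq
    simp only [Finset.mem_coe] at hK hK'
    ext v
    by_cases hvY : v ∈ Y
    · constructor
      · intro hvK
        by_contra hvK'
        have h1 := hxw1 K hK v hvK
        rw [heq] at h1
        exact hxw2 K' hK' v hvY hvK' h1
      · intro hvK'
        by_contra hvK
        have h1 := hxw1 K' hK' v hvK'
        rw [← heq] at h1
        exact hxw2 K hK v hvY hvK h1
    · constructor
      · intro h; exact absurd ((hFprop K hK).1 h) hvY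
      · intro h; exact absurd ((hFprop K' hK').1 h) hvY
  have hmaps : ∀ K ∈ F, xw K ∈ Y := by
    intro K hK
    rw [hY, Set.Finite.mem_toFinset]
    exact hxwA K hK
  have hcard : F.card ≤ Y.card := Finset.card_le_card_of_injOn xw hmaps hinj
  have hFcard : F.card = Y.card + 1 := by
    rw [hF, Finset.card_insert_of_notMem, Finset.card_image_of_injective _
      Finset.singleton_injective]
    intro h
    obtain ⟨v, -, hbad⟩ := Finset.mem_image.mp h
    exact (Finset.singleton_ne_empty v) hbad
  omega

lemma long_word_exists {Γ : Type} [Fintype Γ] {A : Set (List Γ)} (hA : A.Infinite) (L : ℕ) :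
    ∃ u ∈ A, L ≤ u.length := by
  classical
  by_contra h
  push_neg at h
  apply hA
  apply Set.Finite.subset (Finset.finite_toSet (wordsUpTo Γ L))
  intro u hu
  simp only [Finset.coe_biUnion, Finset.mem_coe]
  have := h u hu
  exact (mem_wordsUpTo Γ L u).mpr (by omega)

lemma noncomm_case {Γ : Type} [Fintype Γ] (A : Set (List Γ)) (E : List Γ → List Γ → Prop)
    {σE : Type} [Fintype σE] (ME : DFA (Fin 2 → Option Γ) σE)
    (hacc : ∀ x ∈ A, ∀ y ∈ A, (E x y ↔ cva x y ∈ ME.accepts))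
    (p : ℕ) (hp : 3 ≤ p)
    (hsym : ∀ x ∈ A, ∀ y ∈ A, E x y → E y x)
    (hKp : ¬ ∃ s : Finset (List Γ), ↑s ⊆ A ∧ s.card = p ∧
        ∀ x ∈ s, ∀ y ∈ s, x ≠ y → E x y)
    (hext : ∀ Y : Finset (List Γ), ↑Y ⊆ A →
          ∀ K : Finset (List Γ), K ⊆ Y →
            (¬ ∃ s : Finset (List Γ), s ⊆ K ∧ s.card = p - 1 ∧
                ∀ x ∈ s, ∀ y ∈ s, x ≠ y → E x y) →
            ∃ x ∈ A, (∀ v ∈ K, E x v) ∧ (∀ v ∈ Y, v ∉ K → ¬ E x v))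
    {σA : Type} [Fintype σA] (MA : DFA Γ σA) (hMA : MA.accepts = A)
    (s : σA) (u0 : List Γ) (hu0 : MA.evalFrom MA.start u0 = s)
    (z0 : List Γ) (hz0 : MA.evalFrom s z0 ∈ MA.accept)
    (g l : List Γ) (hg : MA.evalFrom s g = s) (hl : MA.evalFrom s l = s)
    (hgl : g ++ l ≠ l ++ g) : False := by
  classical
  set g0 := g ++ l with hg0
  set g1 := l ++ g with hg1
  have hg0loop : MA.evalFrom s g0 = s := by rw [hg0, DFA.evalFrom_of_append, hg, hl]
  have hg1loop : MA.evalFrom s g1 = s := by rw [hg1, DFA.evalFrom_of_append, hl, hg]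
  have hlen01 : g1.length = g0.length := by rw [hg0, hg1]; simp; omega
  set L0 := g0.length with hL0def
  have hL0 : 1 ≤ L0 := by
    rcases Nat.eq_zero_or_pos L0 with h0 | h1
    · exfalso
      apply hgl
      have hga : g0 = [] := List.length_eq_zero_iff.mp h0
      have hgb : g1 = [] := List.length_eq_zero_iff.mp (by omega)
      rw [hga, hgb]
    · exact h1
  set gen : Bool → List Γ := fun b => if b then g0 else g1 with hgen
  have hgenlen : ∀ b, (gen b).length = L0 := by
    intro b; cases b <;> simp [hgen] <;> omega
  have hgenloop : ∀ b, MA.evalFrom s (gen b) = s := by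
    intro b; cases b <;> simp [hgen, hg0loop, hg1loop]
  set W : List Bool → List Γ := fun bs => u0 ++ (bs.map gen).flatten ++ z0 with hW
  have hbodyloop : ∀ bs : List Bool, MA.evalFrom s ((bs.map gen).flatten) = s := by
    intro bs
    induction bs with
    | nil => rfl
    | cons b bs ih =>
        rw [List.map_cons, List.flatten_cons, DFA.evalFrom_of_append, hgenloop b, ih]
  have hWA : ∀ bs, W bs ∈ A := by
    intro bs
    have h1 : W bs ∈ MA.accepts := by
      rw [DFA.mem_accepts]
      show MA.evalFrom MA.start (u0 ++ (bs.map gen).flatten ++ z0) ∈ MA.accept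
      rw [DFA.evalFrom_of_append, DFA.evalFrom_of_append, hu0, hbodyloop]
      exact hz0
    rw [hMA] at h1
    exact h1
  have hbodylen : ∀ bs : List Bool, ((bs.map gen).flatten).length = bs.length * L0 := by
    intro bs
    induction bs with
    | nil => simp
    | cons b bs ih =>
        rw [List.map_cons, List.flatten_cons, List.length_append, ih, hgenlen]
        simp [Nat.succ_mul]
        omega
  have hWlen : ∀ bs, (W bs).length = u0.length + bs.length * L0 + z0.length := by
    intro bs
    rw [hW]
    simp [hbodylen bs]
    omega
  have flatten_inj : ∀ (bs bs' : List Bool), bs.length = bs'.length →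
      (bs.map gen).flatten = (bs'.map gen).flatten → bs = bs' := by
    intro bs
    induction bs with
    | nil =>
        intro bs' hlen _
        cases bs' with
        | nil => rfl
        | cons b bs' => simp at hlen
    | cons b bs ih =>
        intro bs' hlen h2
        cases bs' with
        | nil => simp at hlen
        | cons b' bs' =>
            rw [List.map_cons, List.map_cons, List.flatten_cons, List.flatten_cons] at h2
            obtain ⟨hb, hrest⟩ := List.append_inj h2 (by rw [hgenlen, hgenlen])
            have hbb : b = b' := by
              by_contra hne
              apply hgl
              cases b <;> cases b'
              · exact absurd rfl hne
              · simp only [hgen, if_true, if_false, Bool.cond_true, Bool.cond_false] at hb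
                exact hb.symm
              · simp only [hgen, if_true, if_false, Bool.cond_true, Bool.cond_false] at hb
                exact hb
              · exact absurd rfl hne
            subst hbb
            rw [ih bs' (by simpa using hlen) hrest]
  have hWinj : ∀ bs bs' : List Bool, bs.length = bs'.length → W bs = W bs' → bs = bs' := by
    intro bs bs' hlen heq
    rw [hW] at heq
    simp only [List.append_assoc] at heq
    have h1 := List.append_cancel_left heq
    have h2 : (bs.map gen).flatten = (bs'.map gen).flatten := by
      apply List.append_cancel_right (bs := z0)
      exact h1
    exact flatten_inj bs bs' hlen h2
  -- parameters
  set G := Fintype.card Γ + 1 with hGdef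
  set qE := Fintype.card σE with hqEdef
  set c0 := u0.length + z0.length with hc0
  set C7 := G*(c0 + L0 + 1) + qE + 2 + p with hC7
  obtain ⟨N1, hN1⟩ := poly_lt_two_pow (p-1) (C7^(p-1))
  set ℓ := N1 with hℓ
  set nn := u0.length + ℓ * L0 + z0.length with hnn
  set m := G*(nn+1) + qE + 2 with hm
  set V := (wordsLen Bool ℓ).image W with hV
  have hVcard : V.card = 2^ℓ := by
    rw [hV, Finset.card_image_of_injOn, card_wordsLen_eq, Fintype.card_bool]
    intro bs hbs bs' hbs' heq
    simp only [Finset.mem_coe, mem_wordsLen] at hbs hbs'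
    exact hWinj bs bs' (by rw [hbs, hbs']) heq
  have hVA : ↑V ⊆ A := by
    intro v hv
    simp only [hV, Finset.coe_image, Set.mem_image, Finset.mem_coe] at hv
    obtain ⟨bs, -, rfl⟩ := hv
    exact hWA bs
  have hVlen : ∀ v ∈ V, v.length ≤ nn := by
    intro v hv
    simp only [hV, Finset.mem_image] at hv
    obtain ⟨bs, hbs, rfl⟩ := hv
    rw [hWlen bs, (mem_wordsLen Bool ℓ bs).mp hbs, hnn]
  have hmp : p + m ≤ C7 * (ℓ + 1) := by
    have h1 : c0 + ℓ*L0 + 1 ≤ (c0 + L0 + 1) * (ℓ + 1) := by nlinarith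
    have h2 : nn + 1 = c0 + ℓ*L0 + 1 := by rw [hnn, hc0]; omega
    have h3 : G*(nn+1) ≤ G*((c0 + L0 + 1) * (ℓ + 1)) :=
      Nat.mul_le_mul_left _ (by omega)
    have h4 : C7 * (ℓ+1) = G*((c0+L0+1)*(ℓ+1)) + (qE+2+p)*(ℓ+1) := by
      rw [hC7]; ring
    have h5 : qE + 2 + p ≤ (qE+2+p)*(ℓ+1) := Nat.le_mul_of_pos_right _ (by omega)
    omega
  have hchle : Nat.choose ((p-1) + (m-1)) (p-1) ≤ 2^ℓ := le_of_lt (by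
    calc Nat.choose ((p-1) + (m-1)) (p-1) ≤ ((p-1)+(m-1))^(p-1) := choose_le_pow _ _
      _ ≤ (C7 * (ℓ+1))^(p-1) := Nat.pow_le_pow_left (by omega) _
      _ = C7^(p-1) * (ℓ+1)^(p-1) := by rw [Nat.mul_pow]
      _ < 2^ℓ := hN1 ℓ le_rfl)
  have hram := ramsey_aux (fun x y => E x y ∧ E y x)
    (fun x y h => ⟨h.2, h.1⟩) ((p-1) + (m-1)) (p-1) (m-1) V le_rfl
    (by rw [hVcard]; exact hchle)
  rcases hram with ⟨C, hCV, hCcard, hCcl⟩ | ⟨I, hIV, hIcard, hIind⟩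
  · apply hKp
    refine ⟨C, ?_, by omega, fun x hx y hy hxy => (hCcl x hx y hy hxy).1⟩
    intro x hx
    exact hVA (hCV hx)
  · have hIA : ↑I ⊆ A := fun x hx => hVA (hIV hx)
    have hindep : ∀ x ∈ I, ∀ y ∈ I, x ≠ y → ¬ E x y := by
      intro x hx y hy hxy hE
      exact hIind x hx y hy hxy ⟨hE, hsym x (hIA hx) y (hIA hy) hE⟩
    have hcount := witness_count A E ME hacc p hp hext I hIA hindep nn
      (fun v hv => hVlen v (hIV hv)) (wordsUpTo Γ nn)
      (fun u _ => ⟨fun h => (mem_wordsUpTo _ _ _).mpr (by omega),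
        fun _ => (mem_wordsUpTo _ _ _).mpr (by rw [List.length_take]; omega)⟩)
    have hIm : I.card = m := by
      rw [hIcard]
      have : 1 ≤ m := by rw [hm]; omega
      omega
    rw [hIm] at hcount
    have h1 : (wordsUpTo Γ nn).card * (1 + 2^qE) ≤ G^(nn+1) * 2^(qE+1) := by
      apply Nat.mul_le_mul
      · exact card_wordsUpTo Γ nn
      · have h2 : 2^(qE+1) = 2^qE + 2^qE := by ring
        have h3 : 1 ≤ 2^qE := Nat.one_le_two_pow
        omega
    have h2 : G^(nn+1) ≤ 2^(G*(nn+1)) := by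
      calc G^(nn+1) ≤ (2^G)^(nn+1) :=
            Nat.pow_le_pow_left (le_of_lt (Nat.lt_two_pow_self (n := G))) _
        _ = 2^(G*(nn+1)) := by rw [← pow_mul]
    have hfinal : 2^m ≤ 2^(G*(nn+1)) * 2^(qE+1) := by
      calc 2^m ≤ (wordsUpTo Γ nn).card * (1 + 2^qE) := hcount
        _ ≤ G^(nn+1) * 2^(qE+1) := h1
        _ ≤ 2^(G*(nn+1)) * 2^(qE+1) := Nat.mul_le_mul_right _ h2
    rw [← pow_add] at hfinal
    have hlt : G*(nn+1) + (qE+1) < m := by rw [hm]; omega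
    have := Nat.pow_lt_pow_right (a := 2) (by omega) hlt
    omega

end NoAuto

namespace NoAuto

lemma comm_case {Γ : Type} [Fintype Γ] (A : Set (List Γ)) (E : List Γ → List Γ → Prop)
    {σE : Type} [Fintype σE] (ME : DFA (Fin 2 → Option Γ) σE)
    (hacc : ∀ x ∈ A, ∀ y ∈ A, (E x y ↔ cva x y ∈ ME.accepts))
    (p : ℕ) (hp : 3 ≤ p)
    (hsym : ∀ x ∈ A, ∀ y ∈ A, E x y → E y x)
    (hKp : ¬ ∃ s : Finset (List Γ), ↑s ⊆ A ∧ s.card = p ∧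
        ∀ x ∈ s, ∀ y ∈ s, x ≠ y → E x y)
    (hext : ∀ Y : Finset (List Γ), ↑Y ⊆ A →
          ∀ K : Finset (List Γ), K ⊆ Y →
            (¬ ∃ s : Finset (List Γ), s ⊆ K ∧ s.card = p - 1 ∧
                ∀ x ∈ s, ∀ y ∈ s, x ≠ y → E x y) →
            ∃ x ∈ A, (∀ v ∈ K, E x v) ∧ (∀ v ∈ Y, v ∉ K → ¬ E x v))
    {σA : Type} [Fintype σA] (MA : DFA Γ σA) (hMA : MA.accepts = A)
    (hcomm : ∀ s : σA, (∃ w0, MA.evalFrom MA.start w0 = s) →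
      (∃ w1, MA.evalFrom s w1 ∈ MA.accept) →
      ∀ g l : List Γ, MA.evalFrom s g = s → MA.evalFrom s l = s → g ++ l = l ++ g)
    (hAinf : A.Infinite) : False := by
  classical
  set qA := Fintype.card σA with hqA
  set qE := Fintype.card σE with hqE
  have hqA1 : 1 ≤ qA := Fintype.card_pos_iff.mpr ⟨MA.start⟩
  obtain ⟨u1, hu1A, hu1len⟩ := long_word_exists hAinf qA
  have hu1acc : MA.evalFrom MA.start u1 ∈ MA.accept := by
    have h1 : u1 ∈ MA.accepts := by rw [hMA]; exact hu1A
    rwa [DFA.mem_accepts] at h1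
  -- pump u1
  obtain ⟨a, ha, b, hb, hab, heq⟩ :=
    Finset.exists_ne_map_eq_of_card_lt_of_maps_to
      (s := Finset.range (qA+1)) (t := (Finset.univ : Finset σA))
      (by simp [hqA]) (fun j _ => Finset.mem_univ (MA.evalFrom MA.start (u1.take j)))
  simp only [Finset.mem_range] at ha hb
  obtain ⟨a', b', ha'b', hb'q, heq'⟩ : ∃ a' b', a' < b' ∧ b' ≤ qA ∧
      MA.evalFrom MA.start (u1.take a') = MA.evalFrom MA.start (u1.take b') := by
    rcases lt_or_gt_of_ne hab with h | h
    · exact ⟨a, b, h, by omega, heq⟩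
    · exact ⟨b, a, h, by omega, heq.symm⟩
  set aw := u1.take a' with haw
  set bw := (u1.drop a').take (b' - a') with hbw
  set cw := u1.drop b' with hcw
  have htakeb : u1.take b' = aw ++ bw := by
    rw [haw, hbw, ← List.take_add]
    congr 1
    omega
  set sstar := MA.evalFrom MA.start aw with hsstar
  have hbwloop : MA.evalFrom sstar bw = sstar := by
    rw [hsstar, ← DFA.evalFrom_of_append, ← htakeb, ← heq']
  have hcwacc : MA.evalFrom sstar cw ∈ MA.accept := by
    have h1 : MA.evalFrom MA.start (u1.take b' ++ cw) ∈ MA.accept := by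
      rw [hcw, List.take_append_drop]
      exact hu1acc
    rw [DFA.evalFrom_of_append, ← heq'] at h1
    exact h1
  have hbwne : bw ≠ [] := by
    rw [hbw]
    intro h
    have := congrArg List.length h
    simp only [List.length_take, List.length_drop, List.length_nil] at this
    omega
  set la := aw.length with hla
  set lb := bw.length with hlb
  set lc := cw.length with hlc
  have hlb1 : 1 ≤ lb := by
    rw [hlb]
    exact List.length_pos_iff.mpr hbwne
  -- the chain
  set ch : ℕ → List Γ := fun i => aw ++ (lpow bw i ++ cw) with hch
  have hchA : ∀ i, ch i ∈ A := by
    intro i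
    have h1 : ch i ∈ MA.accepts := by
      rw [DFA.mem_accepts]
      show MA.evalFrom MA.start (aw ++ (lpow bw i ++ cw)) ∈ MA.accept
      rw [DFA.evalFrom_of_append, DFA.evalFrom_of_append, ← hsstar, evalFrom_lpow,
        Function.iterate_fixed hbwloop]
      exact hcwacc
    rwa [hMA] at h1
  have hchlen : ∀ i, (ch i).length = la + i*lb + lc := by
    intro i
    rw [hch]
    simp only [List.length_append, length_lpow, ← hla, ← hlb, ← hlc]
    omega
  have hchinj : ∀ i j, ch i = ch j → i = j := by
    intro i j h
    have h1 := congrArg List.length h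
    rw [hchlen i, hchlen j] at h1
    have h2 : i * lb = j * lb := by omega
    exact Nat.eq_of_mul_eq_mul_right (by omega) h2
  -- block data for the convolution identity
  set d1 := lc / lb + 1 with hd1
  set bc := (lpow bw d1).take lc with hbc
  set bd := bw.drop (lc % lb) with hbd
  have hDR := Nat.div_add_mod lc lb
  have hmodlt : lc % lb < lb := Nat.mod_lt _ (by omega)
  have hlpowD : (lpow bw (lc/lb)).length = (lc/lb) * lb := by
    rw [length_lpow, ← hlb]
  have hmulcomm : (lc/lb) * lb = lb * (lc/lb) := Nat.mul_comm _ _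
  have hbcbd : bc ++ bd = lpow bw d1 := by
    have e1 : lpow bw d1 = lpow bw (lc/lb) ++ bw := by
      rw [hd1, lpow_add]
      congr 1
      simp
    have e3 : bc = lpow bw (lc/lb) ++ bw.take (lc % lb) := by
      rw [hbc, e1, List.take_append]
      congr 1
      · apply List.take_of_length_le
        rw [hlpowD]
        omega
      · congr 1
        rw [hlpowD]
        omega
    rw [e3, List.append_assoc, hbd, List.take_append_drop, e1]
  have hd1lb : lc ≤ d1 * lb := by
    rw [hd1]
    have : (lc/lb + 1) * lb = (lc/lb)*lb + lb := by ring
    omega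
  have hbclen : bc.length = lc := by
    rw [hbc, List.length_take, length_lpow, ← hlb]
    have : lc ≤ d1 * lb := hd1lb
    omega
  set U := zip2 aw aw with hU
  set V := zip2 bw bw with hV
  set W1 := zip2 cw bc with hW1
  set W2 := padR bd with hW2
  set X := padR bw with hX
  set Yc := padR cw with hYc
  -- THE convolution identity
  have hkey : ∀ i k, d1 ≤ k →
      cva (ch i) (ch (i+k)) =
        U ++ ((lpow V i) ++ (W1 ++ (W2 ++ (lpow X (k - d1) ++ Yc)))) := by
    intro i k hk
    have hsplit2 : lpow bw (i+k) = lpow bw i ++ (bc ++ (bd ++ lpow bw (k - d1))) := by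
      rw [lpow_add]
      congr 1
      have h5 : d1 + (k - d1) = k := by omega
      calc lpow bw k = lpow bw (d1 + (k - d1)) := by rw [h5]
        _ = lpow bw d1 ++ lpow bw (k - d1) := lpow_add _ _ _
        _ = (bc ++ bd) ++ lpow bw (k-d1) := by rw [hbcbd]
        _ = bc ++ (bd ++ lpow bw (k-d1)) := List.append_assoc _ _ _
    have hch2 : ch (i+k) = (aw ++ lpow bw i) ++ (bc ++ (bd ++ (lpow bw (k-d1) ++ cw))) := by
      rw [hch]
      show aw ++ (lpow bw (i+k) ++ cw) = _
      rw [hsplit2]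
      simp only [List.append_assoc]
    have hch1 : ch i = (aw ++ lpow bw i) ++ (cw ++ []) := by
      rw [hch]
      simp [List.append_assoc]
    rw [hch1, hch2, cva_append _ _ _ _ rfl]
    rw [cva_append cw [] bc _ (by rw [hbclen])]
    rw [cva_nil_left, zip2_append _ _ _ _ rfl, zip2_lpow]
    rw [padR_append, padR_append, padR_lpow]
    simp only [← hU, ← hV, ← hW1, ← hW2, ← hX, ← hYc, List.append_assoc]
  -- acceptance as iterates
  set sU := ME.evalFrom ME.start U with hsU
  set gV : σE → σE := fun st => ME.evalFrom st V with hgV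
  set gX : σE → σE := fun st => ME.evalFrom st X with hgX
  set F2 : ℕ → ℕ → Prop := fun i e =>
    ME.evalFrom (gX^[e] (ME.evalFrom (ME.evalFrom (gV^[i] sU) W1) W2)) Yc ∈ ME.accept
    with hF2
  have hACC : ∀ i k, d1 ≤ k → (E (ch i) (ch (i+k)) ↔ F2 i (k - d1)) := by
    intro i k hk
    rw [hacc _ (hchA i) _ (hchA (i+k)), DFA.mem_accepts]
    show ME.evalFrom ME.start (cva (ch i) (ch (i+k))) ∈ ME.accept ↔ _
    rw [hkey i k hk]
    rw [DFA.evalFrom_of_append, DFA.evalFrom_of_append, DFA.evalFrom_of_append,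
      DFA.evalFrom_of_append, DFA.evalFrom_of_append, evalFrom_lpow, evalFrom_lpow]
  -- periodicity
  set P := Nat.factorial qE with hP
  have hP1 : 1 ≤ P := Nat.factorial_pos qE
  have hPi : ∀ i e, qE ≤ i → (F2 (i + P) e ↔ F2 i e) := by
    intro i e hi
    have h1 : gV^[i+P] sU = gV^[i] sU := iterate_eventually_periodic gV sU i hi
    simp only [hF2]
    rw [h1]
  have hPe : ∀ i e, qE ≤ e → (F2 i (e + P) ↔ F2 i e) := by
    intro i e he
    have h1 : gX^[e+P] (ME.evalFrom (ME.evalFrom (gV^[i] sU) W1) W2)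
        = gX^[e] (ME.evalFrom (ME.evalFrom (gV^[i] sU) W1) W2) :=
      iterate_eventually_periodic gX _ e he
    simp only [hF2]
    rw [h1]
  set Δ := P * (d1 + qE + 1) with hΔ
  have hΔd1 : d1 + qE + 1 ≤ Δ := by
    rw [hΔ]
    exact Nat.le_mul_of_pos_left _ (by omega)
  have hred1 : ∀ r e, F2 (qE + r * P) e ↔ F2 qE e := by
    intro r
    induction r with
    | zero => intro e; simp
    | succ r ih =>
        intro e
        have h1 : qE + (r+1) * P = (qE + r * P) + P := by ring
        rw [h1, hPi _ _ (by omega), ih]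
  have hred2 : ∀ r e, qE ≤ e → (F2 qE (e + r * P) ↔ F2 qE e) := by
    intro r
    induction r with
    | zero => intro e _; simp
    | succ r ih =>
        intro e he
        have h1 : e + (r+1) * P = (e + r * P) + P := by ring
        rw [h1, hPe _ _ (by omega), ih e he]
  have hconst : ∀ s t : ℕ, s < t →
      (E (ch (qE + s*Δ)) (ch (qE + t*Δ)) ↔ E (ch qE) (ch (qE + Δ))) := by
    intro s t hst
    set k := (t - s) * Δ with hkdef
    have hsum : s*Δ + (t-s)*Δ = t*Δ := by
      rw [← Nat.add_mul, Nat.add_sub_cancel' (le_of_lt hst)]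
    have hik : qE + t*Δ = (qE + s*Δ) + k := by rw [hkdef]; omega
    have hts1 : 1 ≤ t - s := by omega
    have hkΔ : Δ ≤ k := by
      rw [hkdef]
      exact Nat.le_mul_of_pos_left _ (by omega)
    have hkd1 : d1 ≤ k := by omega
    have h1 := hACC (qE + s*Δ) k hkd1
    rw [← hik] at h1
    have h2 := hACC qE Δ (by omega)
    rw [h1, h2]
    -- reduce the first index
    have h3 : qE + s*Δ = qE + (s*(d1 + qE + 1)) * P := by
      rw [hΔ]; ring
    rw [h3, hred1]
    -- reduce the second index
    set r1 := t - s - 1 with hr1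
    have h52 : t - s = r1 + 1 := by omega
    have h5 : k = Δ + r1*Δ := by rw [hkdef, h52]; ring
    have h6 : r1*Δ = (r1*(d1+qE+1)) * P := by rw [hΔ]; ring
    have h7 : k = Δ + (r1*(d1+qE+1)) * P := by rw [← h6]; exact h5
    have h4 : k - d1 = (Δ - d1) + (r1*(d1+qE+1)) * P := by omega
    rw [h4, hred2 _ _ (by omega)]
  -- dichotomy
  by_cases heps : E (ch qE) (ch (qE + Δ))
  · -- build a K_p clique
    apply hKp
    refine ⟨(Finset.range p).image (fun t => ch (qE + t*Δ)), ?_, ?_, ?_⟩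
    · intro x hx
      simp only [Finset.coe_image, Set.mem_image, Finset.mem_coe] at hx
      obtain ⟨t, -, rfl⟩ := hx
      exact hchA _
    · rw [Finset.card_image_of_injOn, Finset.card_range]
      intro i _ j _ h
      have h1 := hchinj _ _ h
      have hΔ1 : 1 ≤ Δ := le_trans (Nat.le_add_left 1 (d1 + qE)) hΔd1
      have h2 : i * Δ = j * Δ := by omega
      exact Nat.eq_of_mul_eq_mul_right (by omega) h2
    · intro x hx y hy hxy
      simp only [Finset.mem_image, Finset.mem_range] at hx hy
      obtain ⟨t1, -, rfl⟩ := hx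
      obtain ⟨t2, -, rfl⟩ := hy
      have hne : t1 ≠ t2 := by
        intro h; exact hxy (by rw [h])
      rcases lt_or_gt_of_ne hne with h | h
      · exact (hconst t1 t2 h).mpr heps
      · exact hsym _ (hchA _) _ (hchA _) ((hconst t2 t1 h).mpr heps)
  · -- independent chain and counting
    set Wc : ℕ → List Γ := fun s => ch (qE + s*Δ) with hWc
    have hWcA : ∀ s, Wc s ∈ A := fun s => hchA _
    have hWcind : ∀ s t, s ≠ t → ¬ E (Wc s) (Wc t) := by
      intro s t hst hE
      rcases lt_or_gt_of_ne hst with h | h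
      · exact heps ((hconst s t h).mp hE)
      · exact heps ((hconst t s h).mp (hsym _ (hWcA s) _ (hWcA t) hE))
    have hWcinj : ∀ s t, Wc s = Wc t → s = t := by
      intro s t h
      have h1 := hchinj _ _ h
      have hΔ1 : 1 ≤ Δ := le_trans (Nat.le_add_left 1 (d1 + qE)) hΔd1
      have h2 : s * Δ = t * Δ := by omega
      exact Nat.eq_of_mul_eq_mul_right (by omega) h2
    -- constants and choice of m
    set G := Fintype.card Γ + 1 with hG
    set B := G^(qA+1) with hB
    set C8 := la + (qE + Δ)*lb + lc + 1 with hC8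
    set C9 := (B * (B^2 * C8)^qA) * (1 + 2^qE) with hC9
    obtain ⟨N2, hN2⟩ := poly_lt_two_pow qA C9
    set m := N2 + 1 with hm
    set nn := la + (qE + m*Δ)*lb + lc with hnn
    obtain ⟨PF, hPFmem, hPFcard⟩ := shaped_finset Γ qA qA nn
    -- every prefix of an element of A is Shaped
    have hgenShape : ∀ u ∈ A, ∀ w : List Γ,
        (∀ j, j ≤ w.length → w.take j = u.take j) → w.length ≤ u.length →
        Shaped qA qA w := by
      intro u huA w hwtake hwlen
      have huacc : MA.evalFrom MA.start u ∈ MA.accept := by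
        have h1 : u ∈ MA.accepts := by rw [hMA]; exact huA
        rwa [DFA.mem_accepts] at h1
      have hdec := decompose MA hcomm qA Finset.univ MA.start w
        (by rw [Finset.card_univ])
        (fun j _ _ => Finset.mem_univ _)
        ?_
      · rwa [Finset.card_univ, ← hqA] at hdec
      intro j hj1 hj2
      constructor
      · exact ⟨w.take j, rfl⟩
      · refine ⟨u.drop j, ?_⟩
        rw [← DFA.evalFrom_of_append, hwtake j hj2, List.take_append_drop]
        exact huacc
    have hPFhyp : ∀ u ∈ A, (u.length < nn → u ∈ PF) ∧ (nn ≤ u.length → u.take nn ∈ PF) := by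
      intro u huA
      constructor
      · intro hlen
        exact hPFmem u (hgenShape u huA u (fun j _ => rfl) le_rfl) (by omega)
      · intro hlen
        apply hPFmem _ (hgenShape u huA (u.take nn) ?_ (by rw [List.length_take]; omega))
          (by rw [List.length_take]; omega)
        intro j hj
        rw [List.take_take]
        congr 1
        rw [List.length_take] at hj
        exact min_eq_left (by omega)
    -- the independent family
    set Im := (Finset.range m).image Wc with hIm
    have hImA : ↑Im ⊆ A := by
      intro v hv
      simp only [hIm, Finset.coe_image, Set.mem_image, Finset.mem_coe] at hv
      obtain ⟨s, -, rfl⟩ := hv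
      exact hWcA s
    have hImcard : Im.card = m := by
      rw [hIm, Finset.card_image_of_injOn, Finset.card_range]
      intro s _ t _ h
      exact hWcinj s t h
    have hImind : ∀ x ∈ Im, ∀ y ∈ Im, x ≠ y → ¬ E x y := by
      intro x hx y hy hxy
      simp only [hIm, Finset.mem_image] at hx hy
      obtain ⟨s, -, rfl⟩ := hx
      obtain ⟨t, -, rfl⟩ := hy
      exact hWcind s t (fun h => hxy (by rw [h]))
    have hImlen : ∀ v ∈ Im, v.length ≤ nn := by
      intro v hv
      simp only [hIm, Finset.mem_image, Finset.mem_range] at hv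
      obtain ⟨s, hs, rfl⟩ := hv
      rw [hWc]
      simp only
      rw [hchlen, hnn]
      have h1 : s * Δ ≤ m * Δ := Nat.mul_le_mul_right _ (by omega)
      have h2 : (qE + s*Δ)*lb ≤ (qE + m*Δ)*lb := Nat.mul_le_mul_right _ (by omega)
      omega
    have hcount := witness_count A E ME hacc p hp hext Im hImA hImind nn hImlen PF hPFhyp
    rw [hImcard, ← hqE] at hcount
    -- final arithmetic
    have hb2 : nn + 1 ≤ C8 * (m+1) := by
      have egoal : nn + 1 = la + qE*lb + m*(Δ*lb) + lc + 1 := by rw [hnn]; ring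
      have ec8 : C8*(m+1) = (la+lc+1)*(m+1) + (qE*lb)*(m+1) + (Δ*lb)*(m+1) := by
        rw [hC8]; ring
      have e3 : la + lc + 1 ≤ (la+lc+1)*(m+1) := Nat.le_mul_of_pos_right _ (by omega)
      have e4 : qE*lb ≤ (qE*lb)*(m+1) := Nat.le_mul_of_pos_right _ (by omega)
      have e5 : m*(Δ*lb) + Δ*lb = (Δ*lb)*(m+1) := by ring
      omega
    have hb3 : PF.card * (1 + 2^qE) ≤ C9 * (m+1)^qA := by
      calc PF.card * (1 + 2^qE) ≤ (B * (B^2 * (nn+1))^qA) * (1+2^qE) := by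
            apply Nat.mul_le_mul_right
            rw [← hG, ← hB] at hPFcard
            exact hPFcard
        _ ≤ (B * (B^2 * (C8*(m+1)))^qA) * (1+2^qE) := by
            apply Nat.mul_le_mul_right
            apply Nat.mul_le_mul_left
            apply Nat.pow_le_pow_left
            exact Nat.mul_le_mul_left _ hb2
        _ = C9 * (m+1)^qA := by
            have e6 : B^2*(C8*(m+1)) = (B^2*C8)*(m+1) := by ring
            rw [hC9, e6, Nat.mul_pow]
            ring
    have hfin := hN2 m (by omega)
    omega
  
end NoAuto


open NoAuto in
/-- For `p ≥ 3`, the random `K_p`-free graph has no automatic presentation: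
there is no `K_p`-free graph on a regular set of words, with regular (convoluted)
edge relation, satisfying the `K_p`-free extension property. -/
theorem random_kp_free_graph_not_automatic (p : ℕ) (hp : 3 ≤ p) :
    ¬ ∃ (Γ : Type) (_ : Fintype Γ) (A : Set (List Γ)) (E : List Γ → List Γ → Prop),
        Language.IsRegular (A : Language Γ) ∧
        (∀ x ∈ A, ¬ E x x) ∧
        (∀ x ∈ A, ∀ y ∈ A, E x y → E y x) ∧
        Language.IsRegular {w | ∃ x ∈ A, ∃ y ∈ A, E x y ∧ w = conv ![x, y]} ∧
        -- `(A, E)` is `K_p`-free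
        (¬ ∃ s : Finset (List Γ), ↑s ⊆ A ∧ s.card = p ∧
            ∀ x ∈ s, ∀ y ∈ s, x ≠ y → E x y) ∧
        -- extension property for the random `K_p`-free graph
        (∀ Y : Finset (List Γ), ↑Y ⊆ A →
          ∀ K : Finset (List Γ), K ⊆ Y →
            (¬ ∃ s : Finset (List Γ), s ⊆ K ∧ s.card = p - 1 ∧
                ∀ x ∈ s, ∀ y ∈ s, x ≠ y → E x y) →
            ∃ x ∈ A, (∀ v ∈ K, E x v) ∧ (∀ v ∈ Y, v ∉ K → ¬ E x v)) := by
  rintro ⟨Γ, instΓ, A, E, hregA, hirr, hsym, hregE, hKp, hext⟩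
  classical
  obtain ⟨σA, instσA, MA, hMA⟩ := hregA
  obtain ⟨σE, instσE, ME, hME⟩ := hregE
  have hMA2 : MA.accepts = A := hMA
  have hacc : ∀ x ∈ A, ∀ y ∈ A, (E x y ↔ cva x y ∈ ME.accepts) := by
    intro x hx y hy
    rw [hME]
    constructor
    · intro hE
      exact ⟨x, hx, y, hy, hE, (conv_eq_cva x y).symm⟩
    · rintro ⟨x', hx', y', hy', hE', hconv⟩
      rw [conv_eq_cva] at hconv
      have h1 : x = x' := by rw [← cva_fst x y, hconv, cva_fst]
      have h2 : y = y' := by rw [← cva_snd x y, hconv, cva_snd]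
      rw [h1, h2]
      exact hE'
  have hAinf := A_infinite A E p hp hext
  by_cases hcomm : ∀ s : σA, (∃ w0, MA.evalFrom MA.start w0 = s) →
      (∃ w1, MA.evalFrom s w1 ∈ MA.accept) →
      ∀ g l : List Γ, MA.evalFrom s g = s → MA.evalFrom s l = s → g ++ l = l ++ g
  · exact comm_case A E ME hacc p hp hsym hKp hext MA hMA2 hcomm hAinf
  · push_neg at hcomm
    obtain ⟨s, ⟨u0, hu0⟩, ⟨z0, hz0⟩, g, l, hg, hl, hgl⟩ := hcomm
    exact noncomm_case A E ME hacc p hp hsym hKp hext MA hMA2 s u0 hu0 z0 hz0 g l hg hl hgl
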